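/- arXiv:1802.03719 — 5 statements merged into one kernel-verified Lean document; each statement's English description precedes it below -/
import Mathlib

section
/- There exists a unique formal power series D over ℚ with D(0) = 0 satisfying the functional equation D = z² + D²/(z - D), interpreted as the polynomial identity D·(z - D) = z²·(z - D) + D², equivalently 2D² - (z + z²)D + z³ = 0, together with the normalization that the coefficient of z is 0. -/
open PowerSeries Finset

private def f : ℕ → ℚ
  | 0 => 0
  | 1 => 0
  | 2 => 1
  | n+3 => 2 * ∑ j ∈ (Finset.range (n+1)).attach,
      f (j.1+2) * f (n+2-j.1) - f (n+2)
decreasing_by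
  · have := j.2; simp only [Finset.mem_range] at this; omega
  · have := j.2; simp only [Finset.mem_range] at this; omega
  · omega

private lemma f_succ (n : ℕ) :
    f (n+3) = 2 * ∑ j ∈ Finset.range (n+1), f (j+2) * f (n+2-j) - f (n+2) := by
  rw [f, Finset.sum_attach (Finset.range (n+1)) (fun j => f (j+2) * f (n+2-j))]

private lemma sum_reduce (d : ℕ → ℚ) (h0 : d 0 = 0) (h1 : d 1 = 0) (m : ℕ) :
    ∑ k ∈ Finset.range (m + 5), d k * d (m + 4 - k)
      = ∑ j ∈ Finset.range (m + 1), d (j + 2) * d (m + 2 - j) := by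
  rw [show m + 5 = (m + 4) + 1 from rfl, Finset.sum_range_succ, Finset.sum_range_succ,
    Finset.sum_range_succ', Finset.sum_range_succ']
  have e1 : m + 4 - (m + 4) = 0 := by omega
  have e2 : m + 4 - (m + 3) = 1 := by omega
  rw [e1, e2, h0, h1]
  simp only [mul_zero, zero_mul, add_zero]
  exact Finset.sum_congr rfl fun j hj => by
    have : m + 4 - (j + 1 + 1) = m + 2 - j := by
      simp only [Finset.mem_range] at hj; omega
    rw [this]

private lemma coeff_eqn (D : PowerSeries ℚ) (n : ℕ) :
    PowerSeries.coeff (n+4) ((2 : PowerSeries ℚ) * D ^ 2 - (X + X ^ 2) * D + X ^ 3)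
      = 2 * ∑ k ∈ Finset.range (n + 5), PowerSeries.coeff k D * PowerSeries.coeff (n + 4 - k) D
        - PowerSeries.coeff (n+3) D - PowerSeries.coeff (n+2) D := by
  have h2 : (2 : PowerSeries ℚ) = C 2 := by simp [map_ofNat]
  have hx2 : (X ^ 2 : PowerSeries ℚ) * D = X * (X * D) := by ring
  rw [map_add, map_sub, h2, add_mul, map_add, hx2, sq]
  rw [coeff_C_mul, coeff_mul, Finset.Nat.sum_antidiagonal_eq_sum_range_succ_mk]
  rw [show n + 4 = (n+3) + 1 from rfl, coeff_succ_X_mul, coeff_succ_X_mul,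
    show n + 3 = (n+2) + 1 from rfl, coeff_succ_X_mul, coeff_X_pow]
  rw [if_neg (by omega)]
  ring


private lemma hf0 : f 0 = 0 := by simp [f]
private lemma hf1 : f 1 = 0 := by simp [f]
private lemma hf2 : f 2 = 1 := by simp [f]

private lemma coeff_X_mul' (D : PowerSeries ℚ) (n : ℕ) :
    PowerSeries.coeff n (X * D) = if 1 ≤ n then PowerSeries.coeff (n-1) D else 0 := by
  cases n with
  | zero => simp [coeff_zero_eq_constantCoeff]
  | succ n => simp [coeff_succ_X_mul]

private lemma coeff_eqn' (D : PowerSeries ℚ) (n : ℕ) :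
    PowerSeries.coeff n ((2 : PowerSeries ℚ) * D ^ 2 - (X + X ^ 2) * D + X ^ 3)
      = 2 * ∑ k ∈ Finset.range (n + 1), PowerSeries.coeff k D * PowerSeries.coeff (n - k) D
        - (if 1 ≤ n then PowerSeries.coeff (n-1) D else 0)
        - (if 2 ≤ n then PowerSeries.coeff (n-2) D else 0)
        + (if n = 3 then 1 else 0) := by
  have h2 : (2 : PowerSeries ℚ) = C 2 := by simp [map_ofNat]
  have hx2 : (X ^ 2 : PowerSeries ℚ) * D = X * (X * D) := by ring
  rw [map_add, map_sub, h2, add_mul, map_add, hx2, sq]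
  rw [coeff_C_mul, coeff_mul, Finset.Nat.sum_antidiagonal_eq_sum_range_succ_mk,
    coeff_X_mul', coeff_X_mul', coeff_X_mul', coeff_X_pow]
  rcases n with _ | _ | n <;> norm_num
  rw [show n + 1 + 1 - 2 = n by omega]
  ring

/-- There exists a unique formal power series `D` over `ℚ` with `D(0) = 0` and coefficient of
`z` equal to `0` satisfying `2D² - (z + z²)D + z³ = 0`. -/
theorem dissection_gf_unique :
    ∃! D : PowerSeries ℚ,
      PowerSeries.constantCoeff D = 0 ∧
      PowerSeries.coeff 1 D = 0 ∧
      (2 : PowerSeries ℚ) * D ^ 2 - (X + X ^ 2) * D + X ^ 3 = 0 := by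
  refine ⟨PowerSeries.mk f, ⟨?_, ?_, ?_⟩, ?_⟩
  · simp [hf0]
  · simp [hf1]
  · ext m
    rw [coeff_eqn', map_zero]
    simp only [coeff_mk]
    rcases m with _ | _ | _ | _ | m
    · simp [hf0]
    · simp [Finset.sum_range_succ, hf0, hf1]
    · norm_num [Finset.sum_range_succ, hf0, hf1]
    · norm_num [Finset.sum_range_succ, hf0, hf1, hf2]
    · have hs := sum_reduce f hf0 hf1 m
      rw [show m + 5 = m + 4 + 1 by omega] at hs
      rw [hs, if_pos (by omega), if_pos (by omega), if_neg (by omega),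
        show m + 4 - 1 = m + 3 by omega, show m + 4 - 2 = m + 2 by omega, f_succ m]
      ring
  · rintro E ⟨h0, h1, heq⟩
    have h0' : PowerSeries.coeff 0 E = 0 := by
      rwa [coeff_zero_eq_constantCoeff]
    ext n
    rw [coeff_mk]
    induction n using Nat.strong_induction_on with
    | _ n ih =>
      rcases n with _ | _ | _ | n
      · rw [h0', hf0]
      · rw [h1, hf1]
      · have h := coeff_eqn' E 3
        rw [heq, map_zero] at h
        norm_num [Finset.sum_range_succ, h0', h1] at h
        rw [hf2]
        linarith
      · have h := coeff_eqn' E (n + 4)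
        rw [heq, map_zero] at h
        have hs : ∑ k ∈ Finset.range (n + 5),
            PowerSeries.coeff k E * PowerSeries.coeff (n + 4 - k) E
            = ∑ j ∈ Finset.range (n + 1),
            PowerSeries.coeff (j + 2) E * PowerSeries.coeff (n + 2 - j) E :=
          sum_reduce (fun k => PowerSeries.coeff k E) h0' h1 n
        rw [show n + 5 = n + 4 + 1 by omega] at hs
        rw [hs] at h
        rw [if_pos (by omega), if_pos (by omega), if_neg (by omega)] at h
        have e1 : n + 4 - 1 = n + 3 := by omega
        have e2 : n + 4 - 2 = n + 2 := by omega
        rw [e1, e2] at h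
        have hsum : ∑ j ∈ Finset.range (n+1),
            PowerSeries.coeff (j+2) E * PowerSeries.coeff (n+2-j) E
            = ∑ j ∈ Finset.range (n+1), f (j+2) * f (n+2-j) := by
          refine Finset.sum_congr rfl fun j hj => ?_
          simp only [Finset.mem_range] at hj
          rw [ih (j+2) (by omega), ih (n+2-j) (by omega)]
        rw [hsum, ih (n+2) (by omega)] at h
        rw [f_succ n]
        linarith
end

section
/- There exists a unique formal power series y over ℚ with y(0) = 0 satisfying the cubic equation y = y³ + y² - z·y + z, and its initial coefficients are [z¹]y = 1, [z²]y = 0, [z³]y = 1, [z⁴]y = 1, [z⁵]y = 4, [z⁶]y = 8, [z⁷]y = 25. -/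
open PowerSeries


noncomputable def TFD_F (y : PowerSeries ℚ) : PowerSeries ℚ := y ^ 3 + y ^ 2 - X * y + X

lemma TFD_key (y z : PowerSeries ℚ) (hy : constantCoeff y = 0) (hz : constantCoeff z = 0)
    (m : ℕ) (h : ∀ j ≤ m, coeff j (y - z) = 0) :
    ∀ j ≤ m + 1, coeff j (TFD_F y - TFD_F z) = 0 := by
  have hfac : TFD_F y - TFD_F z = (y - z) * (y^2 + y*z + z^2 + y + z - X) := by
    unfold TFD_F; ring
  intro j hj
  rw [hfac, coeff_mul]
  apply Finset.sum_eq_zero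
  rintro ⟨i, i'⟩ hmem
  replace hmem : i + i' = j := by simpa using hmem
  rcases Nat.eq_zero_or_pos i' with h0 | hpos
  · have : coeff 0 (y^2 + y*z + z^2 + y + z - X) = 0 := by
      simp [coeff_zero_eq_constantCoeff, hy, hz]
    simp [h0, this]
  · have : i ≤ m := by omega
    rw [h i this, zero_mul]

lemma TFD_constF (y : PowerSeries ℚ) (hy : constantCoeff y = 0) :
    constantCoeff (TFD_F y) = 0 := by
  simp [TFD_F, hy]

noncomputable def TFD_s : ℕ → PowerSeries ℚ
  | 0 => 0
  | (m+1) => TFD_F (TFD_s m)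

lemma TFD_constS : ∀ m, constantCoeff (TFD_s m) = 0
  | 0 => by simp [TFD_s]
  | (m+1) => TFD_constF _ (TFD_constS m)

lemma TFD_diff : ∀ m, ∀ j ≤ m, coeff j (TFD_s (m+1) - TFD_s m) = 0 := by
  intro m
  induction m with
  | zero =>
    intro j hj
    interval_cases j
    simp [TFD_s, TFD_F, coeff_zero_eq_constantCoeff]
  | succ m ih =>
    exact TFD_key (TFD_s (m+1)) (TFD_s m) (TFD_constS _) (TFD_constS _) m ih

lemma TFD_stable (k : ℕ) : ∀ m, k + 1 ≤ m → coeff k (TFD_s m) = coeff k (TFD_s (k+1)) := by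
  intro m
  induction m with
  | zero => omega
  | succ m ih =>
    intro h
    rcases Nat.lt_or_ge (k+1) (m+1) with hlt | hge
    · have h1 : coeff k (TFD_s (m+1) - TFD_s m) = 0 := TFD_diff m k (by omega)
      rw [map_sub, sub_eq_zero] at h1
      rw [h1]; exact ih (by omega)
    · have : k + 1 = m + 1 := by omega
      rw [this]

noncomputable def TFD_y : PowerSeries ℚ := mk (fun k => coeff k (TFD_s (k+1)))

lemma TFD_coeff_y (k m : ℕ) (h : k + 1 ≤ m) : coeff k TFD_y = coeff k (TFD_s m) := by
  rw [TFD_y, coeff_mk, TFD_stable k m h]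

lemma TFD_const_y : constantCoeff TFD_y = 0 := by
  rw [← coeff_zero_eq_constantCoeff, TFD_coeff_y 0 1 le_rfl, coeff_zero_eq_constantCoeff]
  exact TFD_constS 1

lemma TFD_fixed : TFD_y = TFD_F TFD_y := by
  ext k
  have hP : ∀ j ≤ k, coeff j (TFD_y - TFD_s (k+1)) = 0 := by
    intro j hj
    rw [map_sub, TFD_coeff_y j (k+1) (by omega), sub_self]
  have h2 := TFD_key TFD_y (TFD_s (k+1)) TFD_const_y (TFD_constS _) k hP k (by omega)
  have : TFD_F (TFD_s (k+1)) = TFD_s (k+2) := rfl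
  rw [this, map_sub, sub_eq_zero] at h2
  rw [h2, TFD_coeff_y k (k+2) (by omega)]


lemma TFD_cm (φ ψ : PowerSeries ℚ) (n : ℕ) :
    coeff n (φ * ψ) = ∑ i ∈ Finset.range (n+1), coeff i φ * coeff (n-i) ψ := by
  rw [coeff_mul, Finset.Nat.sum_antidiagonal_eq_sum_range_succ_mk]

lemma TFD_coeffs (y : PowerSeries ℚ) (h0 : constantCoeff y = 0)
    (heq : y = y ^ 3 + y ^ 2 - X * y + X) :
    coeff 1 y = 1 ∧ coeff 2 y = 0 ∧ coeff 3 y = 1 ∧ coeff 4 y = 1 ∧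
    coeff 5 y = 4 ∧ coeff 6 y = 8 ∧ coeff 7 y = 25 := by
  have c0 : coeff 0 y = 0 := by rwa [coeff_zero_eq_constantCoeff]
  have h2 : (y ^ 2 : PowerSeries ℚ) = y * y := by ring
  have h3 : (y ^ 3 : PowerSeries ℚ) = y * y ^ 2 := by ring
  have key : ∀ n : ℕ, coeff (n+1) y
      = coeff (n+1) (y^3) + coeff (n+1) (y^2) - coeff n y + coeff (n+1) X := by
    intro n
    conv_lhs => rw [heq]
    rw [map_add, map_sub, map_add, coeff_succ_X_mul]
  have c1 : coeff 1 y = 1 := by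
    have := key 0
    simp [h2, h3, TFD_cm, Finset.sum_range_succ, c0, coeff_X] at this
    linarith [this]
  have b0 : coeff 0 (y^2) = 0 := by
    rw [h2, TFD_cm]; simp [c0]
  have b1 : coeff 1 (y^2) = 0 := by
    rw [h2, TFD_cm]; simp [Finset.sum_range_succ, c0]
  have b2 : coeff 2 (y^2) = 1 := by
    rw [h2, TFD_cm]
    simp [Finset.sum_range_succ, c0, c1]
    try norm_num
  have t2 : coeff 2 (y^3) = 0 := by
    rw [h3, TFD_cm]
    simp [Finset.sum_range_succ, c0, c1, b0, b1, b2]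
    try norm_num
  have c2 : coeff 2 y = 0 := by
    have := key 1
    rw [b2, t2, c1] at this
    simp [coeff_X] at this
    linarith [this]
  have b3 : coeff 3 (y^2) = 0 := by
    rw [h2, TFD_cm]
    simp [Finset.sum_range_succ, c0, c1, c2]
    try norm_num
  have t3 : coeff 3 (y^3) = 1 := by
    rw [h3, TFD_cm]
    simp [Finset.sum_range_succ, c0, c1, c2, b0, b1, b2, b3]
    try norm_num
  have c3 : coeff 3 y = 1 := by
    have := key 2
    rw [b3, t3, c2] at this
    simp [coeff_X] at this
    linarith [this]
  have b4 : coeff 4 (y^2) = 2 := by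
    rw [h2, TFD_cm]
    simp [Finset.sum_range_succ, c0, c1, c2, c3]
    try norm_num
  have t4 : coeff 4 (y^3) = 0 := by
    rw [h3, TFD_cm]
    simp [Finset.sum_range_succ, c0, c1, c2, c3, b0, b1, b2, b3, b4]
    try norm_num
  have c4 : coeff 4 y = 1 := by
    have := key 3
    rw [b4, t4, c3] at this
    simp [coeff_X] at this
    linarith [this]
  have b5 : coeff 5 (y^2) = 2 := by
    rw [h2, TFD_cm]
    simp [Finset.sum_range_succ, c0, c1, c2, c3, c4]
    try norm_num
  have t5 : coeff 5 (y^3) = 3 := by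
    rw [h3, TFD_cm]
    simp [Finset.sum_range_succ, c0, c1, c2, c3, c4, b0, b1, b2, b3, b4, b5]
    try norm_num
  have c5 : coeff 5 y = 4 := by
    have := key 4
    rw [b5, t5, c4] at this
    simp [coeff_X] at this
    linarith [this]
  have b6 : coeff 6 (y^2) = 9 := by
    rw [h2, TFD_cm]
    simp [Finset.sum_range_succ, c0, c1, c2, c3, c4, c5]
    try norm_num
  have t6 : coeff 6 (y^3) = 3 := by
    rw [h3, TFD_cm]
    simp [Finset.sum_range_succ, c0, c1, c2, c3, c4, c5, b0, b1, b2, b3, b4, b5, b6]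
    try norm_num
  have c6 : coeff 6 y = 8 := by
    have := key 5
    rw [b6, t6, c5] at this
    simp [coeff_X] at this
    linarith [this]
  have b7 : coeff 7 (y^2) = 18 := by
    rw [h2, TFD_cm]
    simp [Finset.sum_range_succ, c0, c1, c2, c3, c4, c5, c6]
    try norm_num
  have t7 : coeff 7 (y^3) = 15 := by
    rw [h3, TFD_cm]
    simp [Finset.sum_range_succ, c0, c1, c2, c3, c4, c5, c6, b0, b1, b2, b3, b4, b5, b6, b7]
    try norm_num
  have c7 : coeff 7 y = 25 := by
    have := key 6
    rw [b7, t7, c6] at this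
    simp [coeff_X] at this
    linarith [this]
  exact ⟨c1, c2, c3, c4, c5, c6, c7⟩

lemma TFD_uniq (y z : PowerSeries ℚ) (hy : constantCoeff y = 0) (hyeq : y = TFD_F y)
    (hz : constantCoeff z = 0) (hzeq : z = TFD_F z) : y = z := by
  have main : ∀ m, ∀ j ≤ m, coeff j (y - z) = 0 := by
    intro m
    induction m with
    | zero =>
      intro j hj
      interval_cases j
      simp [coeff_zero_eq_constantCoeff, hy, hz]
    | succ m ih =>
      intro j hj
      have := TFD_key y z hy hz m ih j hj
      rwa [← hyeq, ← hzeq] at this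
  ext n
  have h := main n n le_rfl
  rw [map_sub, sub_eq_zero] at h
  exact h

/-- There exists a unique formal power series `y` over `ℚ` with `y(0) = 0` satisfying
`y = y³ + y² - z·y + z`, and its initial coefficients are `1, 0, 1, 1, 4, 8, 25`
(for `z¹` through `z⁷`).  This is the generating function of triangle-free polygon
dissections. -/
theorem triangle_free_dissections :
    (∃! y : PowerSeries ℚ,
        PowerSeries.constantCoeff y = 0 ∧ y = y ^ 3 + y ^ 2 - X * y + X) ∧
    (∀ y : PowerSeries ℚ,
        PowerSeries.constantCoeff y = 0 → y = y ^ 3 + y ^ 2 - X * y + X →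
        PowerSeries.coeff 1 y = 1 ∧
        PowerSeries.coeff 2 y = 0 ∧
        PowerSeries.coeff 3 y = 1 ∧
        PowerSeries.coeff 4 y = 1 ∧
        PowerSeries.coeff 5 y = 4 ∧
        PowerSeries.coeff 6 y = 8 ∧
        PowerSeries.coeff 7 y = 25) := by
  constructor
  · refine ⟨TFD_y, ⟨TFD_const_y, TFD_fixed⟩, ?_⟩
    rintro z ⟨hz0, hzeq⟩
    exact TFD_uniq z TFD_y hz0 hzeq TFD_const_y TFD_fixed
  · intro y h0 heq
    exact TFD_coeffs y h0 heq
end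

section
/- There exist unique formal power series y and y₀ over ℚ, both with constant term 0, satisfying the system y = y₀ + y₀² and y₀ = y⁴ + y·y₀ - z·y + z, and the initial coefficients of y are 1, 1, 0, 1, 7, 22, 49 (for z¹ through z⁷). -/
open PowerSeries Finset

namespace FCF

noncomputable def F (w : PowerSeries ℚ) : PowerSeries ℚ :=
  (w + w ^ 2) ^ 4 + (w + w ^ 2) * w - X * (w + w ^ 2) + X

def E (n : ℕ) (u v : PowerSeries ℚ) : Prop := ∀ k < n, coeff k u = coeff k v

lemma E_zero (u v : PowerSeries ℚ) : E 0 u v := fun k hk => absurd hk (Nat.not_lt_zero k)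

lemma E_mono {n m : ℕ} {u v : PowerSeries ℚ} (h : n ≤ m) (hE : E m u v) : E n u v :=
  fun k hk => hE k (hk.trans_le h)

lemma E_refl (n : ℕ) (u : PowerSeries ℚ) : E n u u := fun _ _ => rfl

lemma E_add {n : ℕ} {a b c d : PowerSeries ℚ} (h1 : E n a b) (h2 : E n c d) :
    E n (a + c) (b + d) := by
  intro k hk; simp [map_add, h1 k hk, h2 k hk]

lemma E_sub {n : ℕ} {a b c d : PowerSeries ℚ} (h1 : E n a b) (h2 : E n c d) :
    E n (a - c) (b - d) := by
  intro k hk; simp [map_sub, h1 k hk, h2 k hk]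

lemma E_mul {n : ℕ} {a b c d : PowerSeries ℚ} (ha : constantCoeff a = 0)
    (hb : constantCoeff b = 0) (hc : constantCoeff c = 0) (hd : constantCoeff d = 0)
    (h1 : E n a b) (h2 : E n c d) : E (n + 1) (a * c) (b * d) := by
  intro k hk
  rw [PowerSeries.coeff_mul, PowerSeries.coeff_mul]
  apply Finset.sum_congr rfl
  intro p hp
  rw [Finset.HasAntidiagonal.mem_antidiagonal] at hp
  rcases Nat.eq_zero_or_pos p.1 with h | h
  · rw [h]; simp [PowerSeries.coeff_zero_eq_constantCoeff, ha, hb]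
  rcases Nat.eq_zero_or_pos p.2 with h' | h'
  · rw [h']; simp [PowerSeries.coeff_zero_eq_constantCoeff, hc, hd]
  rw [h1 _ (by omega), h2 _ (by omega)]

lemma ccF {w : PowerSeries ℚ} (hw : constantCoeff w = 0) : constantCoeff (F w) = 0 := by
  simp [F, map_add, map_sub, map_mul, map_pow, hw, PowerSeries.constantCoeff_X]

lemma pow4 (w : PowerSeries ℚ) : w ^ 4 = (w * w) * (w * w) := by ring

lemma contract {n : ℕ} {u v : PowerSeries ℚ} (hu : constantCoeff u = 0)
    (hv : constantCoeff v = 0) (h : E n u v) : E (n + 1) (F u) (F v) := by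
  have hgu : constantCoeff (u + u ^ 2) = 0 := by simp [map_add, map_pow, hu]
  have hgv : constantCoeff (v + v ^ 2) = 0 := by simp [map_add, map_pow, hv]
  have hg : E n (u + u ^ 2) (v + v ^ 2) := by
    have hsq : E n (u ^ 2) (v ^ 2) := by
      rw [pow_two, pow_two]
      exact E_mono (Nat.le_succ n) (E_mul hu hv hu hv h h)
    exact E_add h hsq
  have hgg : E n ((u + u ^ 2) * (u + u ^ 2)) ((v + v ^ 2) * (v + v ^ 2)) :=
    E_mono (Nat.le_succ n) (E_mul hgu hgv hgu hgv hg hg)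
  have hccgg : constantCoeff ((u + u ^ 2) * (u + u ^ 2)) = 0 := by simp [map_mul, hgu]
  have hccgg' : constantCoeff ((v + v ^ 2) * (v + v ^ 2)) = 0 := by simp [map_mul, hgv]
  have h4 : E (n + 1) ((u + u ^ 2) ^ 4) ((v + v ^ 2) ^ 4) := by
    rw [pow4, pow4]
    exact E_mul hccgg hccgg' hccgg hccgg' hgg hgg
  have hmu : E (n + 1) ((u + u ^ 2) * u) ((v + v ^ 2) * v) := E_mul hgu hgv hu hv hg h
  have hXg : E (n + 1) (X * (u + u ^ 2)) (X * (v + v ^ 2)) :=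
    E_mul PowerSeries.constantCoeff_X PowerSeries.constantCoeff_X hgu hgv (E_refl n X) hg
  exact E_add (E_sub (E_add h4 hmu) hXg) (E_refl (n + 1) X)

noncomputable def S : ℕ → PowerSeries ℚ
  | 0 => 0
  | n + 1 => F (S n)

lemma ccS : ∀ n, constantCoeff (S n) = 0
  | 0 => by simp [S]
  | n + 1 => ccF (ccS n)

lemma ES : ∀ n, E n (S n) (S (n + 1))
  | 0 => E_zero _ _
  | n + 1 => contract (ccS n) (ccS (n + 1)) (ES n)

lemma stable {n m : ℕ} (h : n ≤ m) : E n (S n) (S m) := by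
  induction m with
  | zero => have : n = 0 := Nat.le_zero.mp h; subst this; exact E_refl 0 _
  | succ m ih =>
    rcases Nat.lt_succ_iff_lt_or_eq.mp (Nat.lt_succ_of_le h) with h' | h'
    · intro k hk
      rw [ih (by omega) k hk]
      exact E_mono (by omega) (ES m) k hk
    · subst h'; exact E_refl _ _

noncomputable def y0 : PowerSeries ℚ := PowerSeries.mk fun n => coeff n (S (n + 1))

lemma y0_approx (n : ℕ) : E n y0 (S n) := by
  intro k hk
  rw [y0, PowerSeries.coeff_mk]
  exact stable (Nat.succ_le_of_lt hk) k (Nat.lt_succ_self k)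

lemma cc_y0 : constantCoeff y0 = 0 := by
  rw [← PowerSeries.coeff_zero_eq_constantCoeff, y0, PowerSeries.coeff_mk,
    PowerSeries.coeff_zero_eq_constantCoeff]
  exact ccS 1

lemma fix : y0 = F y0 := by
  ext n
  rw [y0, PowerSeries.coeff_mk, ← y0]
  have h1 : coeff n (F y0) = coeff n (F (S n)) :=
    contract cc_y0 (ccS n) (y0_approx n) n (Nat.lt_succ_self n)
  rw [h1]
  rfl

lemma unique_aux {u v : PowerSeries ℚ} (hu : constantCoeff u = 0)
    (hv : constantCoeff v = 0) (hu' : u = F u) (hv' : v = F v) : u = v := by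
  have h : ∀ n, E n u v := by
    intro n
    induction n with
    | zero => exact E_zero _ _
    | succ n ih =>
      intro k hk
      rw [hu', hv']
      exact contract hu hv ih k hk
  ext k
  exact h (k + 1) k (Nat.lt_succ_self k)

end FCF
lemma cm (φ ψ : PowerSeries ℚ) (n : ℕ) :
    coeff n (φ * ψ) = ∑ i ∈ Finset.range (n + 1), coeff i φ * coeff (n - i) ψ := by
  rw [PowerSeries.coeff_mul]
  exact Finset.Nat.sum_antidiagonal_eq_sum_range_succ_mk _ _

/-- There exist unique formal power series `y` and `y₀` over `ℚ`, both with constant term 0,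
satisfying `y = y₀ + y₀²` and `y₀ = y⁴ + y·y₀ - z·y + z`, and the initial coefficients of
`y` are `1, 1, 0, 1, 7, 22, 49` (for `z¹` through `z⁷`).  This is the generating function of
polygon dissections avoiding 4-cycles as subgraphs. -/
theorem four_cycle_free_dissections :
    (∃! p : PowerSeries ℚ × PowerSeries ℚ,
        PowerSeries.constantCoeff p.1 = 0 ∧
        PowerSeries.constantCoeff p.2 = 0 ∧
        p.1 = p.2 + p.2 ^ 2 ∧
        p.2 = p.1 ^ 4 + p.1 * p.2 - X * p.1 + X) ∧
    (∀ y y₀ : PowerSeries ℚ,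
        PowerSeries.constantCoeff y = 0 →
        PowerSeries.constantCoeff y₀ = 0 →
        y = y₀ + y₀ ^ 2 →
        y₀ = y ^ 4 + y * y₀ - X * y + X →
        PowerSeries.coeff 1 y = 1 ∧
        PowerSeries.coeff 2 y = 1 ∧
        PowerSeries.coeff 3 y = 0 ∧
        PowerSeries.coeff 4 y = 1 ∧
        PowerSeries.coeff 5 y = 7 ∧
        PowerSeries.coeff 6 y = 22 ∧
        PowerSeries.coeff 7 y = 49) := by
  constructor
  · refine ⟨(FCF.y0 + FCF.y0 ^ 2, FCF.y0), ⟨?_, FCF.cc_y0, rfl, ?_⟩, ?_⟩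
    · simp [map_add, map_pow, FCF.cc_y0]
    · exact FCF.fix
    · rintro q ⟨hq1, hq2, hq3, hq4⟩
      have hqfix : q.2 = FCF.F q.2 := by rw [FCF.F, ← hq3]; exact hq4
      have h2 : q.2 = FCF.y0 := FCF.unique_aux hq2 FCF.cc_y0 hqfix FCF.fix
      exact Prod.ext (by rw [hq3, h2]) h2
  · intro y y₀ hy hy0 h1 h2
    have ha0 : coeff 0 y = 0 := by rwa [PowerSeries.coeff_zero_eq_constantCoeff]
    have hb0 : coeff 0 y₀ = 0 := by rwa [PowerSeries.coeff_zero_eq_constantCoeff]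
    have h1' : y = y₀ + y₀ * y₀ := by conv_lhs => rw [h1, pow_two]
    have h2' : y₀ = (y * y) * (y * y) + y * y₀ - X * y + X := by conv_lhs => rw [h2, FCF.pow4 y]
    have key1 : ∀ n, coeff n y = coeff n y₀ + coeff n (y₀ * y₀) := by
      intro n; conv_lhs => rw [h1']
      simp [map_add]
    have key2 : ∀ n, coeff n y₀ =
        coeff n ((y * y) * (y * y)) + coeff n (y * y₀) - coeff n (X * y)
          + coeff n X := by
      intro n; conv_lhs => rw [h2']
      simp [map_add, map_sub]
    have hb1 : coeff 1 y₀ = 1 := by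
      have h := key2 1
      simp [cm, Finset.sum_range_succ, PowerSeries.coeff_X, ha0, hb0] at h
      linarith
    have ha1 : coeff 1 y = 1 := by
      have h := key1 1
      simp [cm, Finset.sum_range_succ, ha0, hb0, hb1] at h
      linarith
    have hb2 : coeff 2 y₀ = 0 := by
      have h := key2 2
      simp [cm, Finset.sum_range_succ, PowerSeries.coeff_X, ha0, hb0, ha1, hb1] at h
      linarith
    have ha2 : coeff 2 y = 1 := by
      have h := key1 2
      simp [cm, Finset.sum_range_succ, ha0, hb0, ha1, hb1, hb2] at h
      linarith
    have hb3 : coeff 3 y₀ = 0 := by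
      have h := key2 3
      simp [cm, Finset.sum_range_succ, PowerSeries.coeff_X, ha0, hb0, ha1, hb1, ha2, hb2] at h
      linarith
    have ha3 : coeff 3 y = 0 := by
      have h := key1 3
      simp [cm, Finset.sum_range_succ, ha0, hb0, ha1, hb1, ha2, hb2, hb3] at h
      linarith
    have hb4 : coeff 4 y₀ = 1 := by
      have h := key2 4
      simp [cm, Finset.sum_range_succ, PowerSeries.coeff_X, ha0, hb0, ha1, hb1, ha2, hb2, ha3,
        hb3] at h
      linarith
    have ha4 : coeff 4 y = 1 := by
      have h := key1 4
      simp [cm, Finset.sum_range_succ, ha0, hb0, ha1, hb1, ha2, hb2, ha3, hb3, hb4] at h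
      linarith
    have hb5 : coeff 5 y₀ = 5 := by
      have h := key2 5
      simp [cm, Finset.sum_range_succ, PowerSeries.coeff_X, ha0, hb0, ha1, hb1, ha2, hb2, ha3,
        hb3, ha4, hb4] at h
      linarith
    have ha5 : coeff 5 y = 7 := by
      have h := key1 5
      simp [cm, Finset.sum_range_succ, ha0, hb0, ha1, hb1, ha2, hb2, ha3, hb3, ha4, hb4, hb5] at h
      linarith
    have hb6 : coeff 6 y₀ = 12 := by
      have h := key2 6
      simp [cm, Finset.sum_range_succ, PowerSeries.coeff_X, ha0, hb0, ha1, hb1, ha2, hb2, ha3,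
        hb3, ha4, hb4, ha5, hb5] at h
      linarith
    have ha6 : coeff 6 y = 22 := by
      have h := key1 6
      simp [cm, Finset.sum_range_succ, ha0, hb0, ha1, hb1, ha2, hb2, ha3, hb3, ha4, hb4, ha5,
        hb5, hb6] at h
      linarith
    have hb7 : coeff 7 y₀ = 25 := by
      have h := key2 7
      simp [cm, Finset.sum_range_succ, PowerSeries.coeff_X, ha0, hb0, ha1, hb1, ha2, hb2, ha3,
        hb3, ha4, hb4, ha5, hb5, ha6, hb6] at h
      linarith
    have ha7 : coeff 7 y = 49 := by
      have h := key1 7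
      simp [cm, Finset.sum_range_succ, ha0, hb0, ha1, hb1, ha2, hb2, ha3, hb3, ha4, hb4, ha5,
        hb5, ha6, hb6, hb7] at h
      linarith
    exact ⟨ha1, ha2, ha3, ha4, ha5, ha6, ha7⟩
end

section
/- Any 2-connected subgraph H (with at least 3 vertices) of a polygon dissection graph is outerplanar and has a Hamilton cycle; in particular, H is isomorphic to a polygon dissection graph. -/
/-- A graph is outerplanar if its vertices can be arranged on a circle so that edges, drawn
as chords, are pairwise non-crossing. -/
def SimpleGraph.Outerplanar {V : Type*} (G : SimpleGraph V) : Prop :=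
  ∃ (n : ℕ) (σ : V ≃ Fin n), ∀ a b c d : V, G.Adj a b → G.Adj c d →
    ¬(σ a < σ c ∧ σ c < σ b ∧ σ b < σ d)

/-- A graph is 2-connected if it has at least 3 vertices and deleting any single vertex
leaves a connected graph. -/
def SimpleGraph.TwoConnected {V : Type*} (G : SimpleGraph V) : Prop :=
  3 ≤ Nat.card V ∧ ∀ v : V, (G.induce {v}ᶜ).Connected

/-- A dissection of the convex `n`-gon, viewed as a graph on `Fin n`: it contains all the
polygon edges `{i, i+1}` (indices mod `n`) and its edges are pairwise non-crossing chords. -/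
def IsDissection (n : ℕ) (G : SimpleGraph (Fin n)) : Prop :=
  (∀ i : Fin n, G.Adj i ⟨((i : ℕ) + 1) % n, Nat.mod_lt _ i.pos⟩) ∧
  ∀ a b c d : Fin n, G.Adj a b → G.Adj c d → ¬(a < c ∧ c < b ∧ b < d)

section Aux

open SimpleGraph

/-- If `M` is a set of vertices not containing `z`, closed under adjacency except through `z`,
with `x ∈ M` and `y ∉ M` (both different from `z`), then `G - z` is disconnected. -/
lemma cut_lemma {α : Type*} (D : SimpleGraph α) (z : α)
    (hconn : (D.induce {z}ᶜ).Connected) (M : Set α) {x y : α}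
    (hx : x ∈ M) (hxz : x ≠ z) (hy : y ∉ M) (hyz : y ≠ z) (_hMz : z ∉ M)
    (hclosed : ∀ a b, a ∈ M → D.Adj a b → b = z ∨ b ∈ M) : False := by
  obtain ⟨w⟩ := hconn.preconnected ⟨x, hxz⟩ ⟨y, hyz⟩
  suffices hgen : ∀ (u v : ↑({z}ᶜ : Set α)) (_ : (D.induce {z}ᶜ).Walk u v),
      u.1 ∈ M → v.1 ∉ M → False from hgen _ _ w hx hy
  intro u v w
  induction w with
  | nil => exact fun h h' => h' h
  | cons h p ih =>
    intro hu hv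
    rename_i a b c
    have hadj : D.Adj a.1 b.1 := h
    rcases hclosed a.1 b.1 hu hadj with h1 | h1
    · exact b.2 h1
    · exact ih h1 hv

/-- Along a walk from below `t` to above `t` there is an edge crossing `t`. -/
lemma exists_crossing_edge {α : Type*} [LinearOrder α] (D : SimpleGraph α) (t : α) :
    ∀ {x y : α} (_ : D.Walk x y), x ≤ t → t < y → ∃ a b, D.Adj a b ∧ a ≤ t ∧ t < b
  | x, _, SimpleGraph.Walk.nil, hx, hy => absurd (hx.trans_lt hy) (lt_irrefl _)
  | x, y, SimpleGraph.Walk.cons h p, hx, hy => by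
    rcases le_or_gt _ t with hc | hc
    · exact exists_crossing_edge D t p hc hy
    · exact ⟨x, _, h, hx, hc⟩

variable {m : ℕ} {D : SimpleGraph (Fin m)}

lemma D_connected (hm : 3 ≤ m) (hconn : ∀ v : Fin m, (D.induce {v}ᶜ).Connected) :
    D.Connected := by
  have hne : Nonempty (Fin m) := ⟨⟨0, by omega⟩⟩
  refine ⟨fun x y => ?_⟩
  have h1 : (Finset.univ \ {x, y} : Finset (Fin m)).Nonempty := by
    rw [← Finset.card_pos]
    by_contra hc
    push_neg at hc
    have h0 : (Finset.univ \ {x, y} : Finset (Fin m)).card = 0 := by omega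
    have hsub : (Finset.univ : Finset (Fin m)) ⊆ {x, y} :=
      Finset.sdiff_eq_empty_iff_subset.1 (Finset.card_eq_zero.1 h0)
    have h2 := Finset.card_le_card hsub
    have h3 := (Finset.card_insert_le x ({y} : Finset (Fin m)))
    simp only [Finset.card_univ, Fintype.card_fin, Finset.card_singleton] at h2 h3
    omega
  obtain ⟨z, hz⟩ := h1
  simp only [Finset.mem_sdiff, Finset.mem_univ, Finset.mem_insert, Finset.mem_singleton,
    true_and, not_or] at hz
  have hx : x ∈ ({z}ᶜ : Set (Fin m)) := by simp [Ne.symm hz.1]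
  have hy : y ∈ ({z}ᶜ : Set (Fin m)) := by simp [Ne.symm hz.2]
  have hr := (hconn z).preconnected ⟨x, hx⟩ ⟨y, hy⟩
  exact hr.map (⟨Subtype.val, fun h => h⟩ : (D.induce ({z}ᶜ : Set (Fin m))) →g D)

lemma consec_adj (hm : 3 ≤ m)
    (hcross : ∀ a b c d : Fin m, D.Adj a b → D.Adj c d → ¬(a < c ∧ c < b ∧ b < d))
    (hconn : ∀ v : Fin m, (D.induce {v}ᶜ).Connected) :
    ∀ k : ℕ, (h : k + 1 < m) → D.Adj ⟨k+1, h⟩ ⟨k, Nat.lt_of_succ_lt h⟩ := by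
  classical
  intro k hk1
  set i : Fin m := ⟨k, Nat.lt_of_succ_lt hk1⟩ with hidef
  set v : Fin m := ⟨k+1, hk1⟩ with hvdef
  have hiv : i < v := by simp [hidef, hvdef, Fin.lt_def]
  by_contra hne
  rw [adj_comm] at hne
  obtain ⟨w⟩ := (D_connected hm hconn).preconnected i v
  obtain ⟨a, b, hab, ha, hb⟩ := exists_crossing_edge D i w (le_refl i) hiv
  let F : Finset (Fin m) := Finset.univ.filter (fun c => ∃ d, D.Adj c d ∧ c ≤ i ∧ i < d)
  have hFne : F.Nonempty := ⟨a, by simp only [F, Finset.mem_filter, Finset.mem_univ, true_and]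
                                   exact ⟨b, hab, ha, hb⟩⟩
  set a1 := F.max' hFne with ha1def
  have ha1 : ∃ d, D.Adj a1 d ∧ a1 ≤ i ∧ i < d := by
    have := F.max'_mem hFne
    simpa only [F, Finset.mem_filter, Finset.mem_univ, true_and] using this
  have ha1i : a1 ≤ i := ha1.choose_spec.2.1
  have ha1max : ∀ c d, D.Adj c d → c ≤ i → i < d → c ≤ a1 := fun c d h1 h2 h3 =>
    F.le_max' c (by simp only [F, Finset.mem_filter, Finset.mem_univ, true_and]
                    exact ⟨d, h1, h2, h3⟩)
  let F2 : Finset (Fin m) := Finset.univ.filter (fun d => D.Adj a1 d ∧ i < d)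
  have hF2ne : F2.Nonempty :=
    ⟨ha1.choose, by simp only [F2, Finset.mem_filter, Finset.mem_univ, true_and]
                    exact ⟨ha1.choose_spec.1, ha1.choose_spec.2.2⟩⟩
  set b1 := F2.min' hF2ne with hb1def
  have hb1 : D.Adj a1 b1 ∧ i < b1 := by
    have := F2.min'_mem hF2ne
    simpa only [F2, Finset.mem_filter, Finset.mem_univ, true_and] using this
  have hb1min : ∀ c d, D.Adj c d → c ≤ i → i < d → b1 ≤ d := by
    intro c d h1 h2 h3
    rcases eq_or_lt_of_le (ha1max c d h1 h2 h3) with heq | hlt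
    · exact F2.min'_le d (by simp only [F2, Finset.mem_filter, Finset.mem_univ, true_and]
                             exact ⟨heq ▸ h1, h3⟩)
    · by_contra hdb
      push_neg at hdb
      exact hcross c d a1 b1 h1 hb1.1 ⟨hlt, lt_of_le_of_lt ha1i h3, hdb⟩
  have hvb1 : v ≤ b1 := by
    have := hb1.2
    simp only [Fin.lt_def, hidef] at this
    simp only [Fin.le_def, hvdef]
    omega
  have hnb : a1 < i ∨ v < b1 := by
    by_contra hc
    push_neg at hc
    have e1 : a1 = i := le_antisymm ha1i hc.1
    have e2 : b1 = v := le_antisymm hc.2 hvb1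
    exact hne (e1 ▸ e2 ▸ hb1.1)
  rcases hnb with hcase | hcase
  · refine cut_lemma D a1 (hconn a1) {x | a1 < x ∧ x ≤ i} (x := i) (y := v)
      ⟨hcase, le_refl i⟩ (ne_of_gt hcase) ?_ (ne_of_gt (lt_of_le_of_lt ha1i hiv)) ?_ ?_
    · exact fun hmem => absurd hmem.2 (not_le.2 hiv)
    · exact fun hmem => lt_irrefl _ hmem.1
    · intro p q hp hpq
      rcases lt_trichotomy q a1 with h | h | h
      · exact absurd ⟨h, hp.1, lt_of_le_of_lt hp.2 hb1.2⟩ (hcross q p a1 b1 hpq.symm hb1.1)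
      · exact Or.inl h
      · rcases le_or_gt q i with h2 | h2
        · exact Or.inr ⟨h, h2⟩
        · exact absurd (ha1max p q hpq hp.2 h2) (not_le.2 hp.1)
  · refine cut_lemma D b1 (hconn b1) {x | v ≤ x ∧ x < b1} (x := v) (y := i)
      ⟨le_refl v, hcase⟩ (ne_of_lt hcase) ?_ (ne_of_lt hb1.2) ?_ ?_
    · exact fun hmem => absurd hmem.1 (not_le.2 hiv)
    · exact fun hmem => lt_irrefl _ hmem.2
    · intro p q hp hpq
      have hpa1 : a1 < p := lt_of_le_of_lt ha1i (lt_of_lt_of_le hiv hp.1)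
      rcases lt_trichotomy b1 q with h | h | h
      · exact absurd ⟨hpa1, hp.2, h⟩ (hcross a1 b1 p q hb1.1 hpq)
      · exact Or.inl h.symm
      · rcases le_or_gt v q with h2 | h2
        · exact Or.inr ⟨h2, h⟩
        · have hqi : q ≤ i := by
            simp only [Fin.le_def, hidef]
            simp only [Fin.lt_def, hvdef] at h2
            omega
          have := hb1min q p hpq.symm hqi (lt_of_lt_of_le hiv hp.1)
          exact absurd this (not_le.2 hp.2)

lemma wrap_adj (hm : 3 ≤ m)
    (hcross : ∀ a b c d : Fin m, D.Adj a b → D.Adj c d → ¬(a < c ∧ c < b ∧ b < d))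
    (hconn : ∀ v : Fin m, (D.induce {v}ᶜ).Connected) :
    D.Adj ⟨0, by omega⟩ ⟨m-1, by omega⟩ := by
  classical
  set u : Fin m := ⟨0, by omega⟩ with hudef
  set v : Fin m := ⟨m-1, by omega⟩ with hvdef
  have huv : u < v := by simp only [hudef, hvdef, Fin.lt_def]; omega
  have hvmax : ∀ x : Fin m, x ≤ v := by
    intro x; simp only [hvdef, Fin.le_def]; omega
  by_contra hne
  obtain ⟨w⟩ := (D_connected hm hconn).preconnected u v
  obtain ⟨a, b, hab, ha, hb⟩ := exists_crossing_edge D u w (le_refl u) huv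
  have hau : a = u := le_antisymm ha (by simp only [hudef, Fin.le_def]; omega)
  let F : Finset (Fin m) := Finset.univ.filter (fun x => D.Adj u x)
  have hFne : F.Nonempty := ⟨b, by simpa only [F, Finset.mem_filter, Finset.mem_univ, true_and]
                                     using hau ▸ hab⟩
  set x0 := F.max' hFne with hx0def
  have hx0 : D.Adj u x0 := by
    have := F.max'_mem hFne
    simpa only [F, Finset.mem_filter, Finset.mem_univ, true_and] using this
  have hx0max : ∀ x, D.Adj u x → x ≤ x0 := fun x h =>
    F.le_max' x (by simpa only [F, Finset.mem_filter, Finset.mem_univ, true_and] using h)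
  have hx0u : u < x0 := lt_of_le_of_ne (by simp only [hudef, Fin.le_def]; omega)
    (fun h => D.irrefl (h ▸ hx0))
  have hx0v : x0 < v := lt_of_le_of_ne (hvmax x0) (fun h => hne (h ▸ hx0))
  refine cut_lemma D x0 (hconn x0) {x | x < x0} (x := u) (y := v)
    hx0u (ne_of_lt hx0u) ?_ (ne_of_gt hx0v) ?_ ?_
  · intro hmem
    simp only [Set.mem_setOf_eq] at hmem
    exact absurd hmem (asymm hx0v)
  · intro hmem
    simp only [Set.mem_setOf_eq] at hmem
    exact lt_irrefl _ hmem
  · intro p q hp hpq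
    simp only [Set.mem_setOf_eq] at hp
    rcases lt_trichotomy q x0 with h | h | h
    · exact Or.inr h
    · exact Or.inl h
    · exfalso
      rcases eq_or_lt_of_le (show u ≤ p by simp only [hudef, Fin.le_def]; omega) with heq | hlt
      · exact absurd (hx0max q (heq ▸ hpq)) (not_le.2 h)
      · exact hcross u x0 p q hx0 hpq ⟨hlt, hp, h⟩

/-- The walk k → k-1 → ... → 0. -/
def walkDown (hm0 : 0 < m)
    (hadj : ∀ k : ℕ, (h : k + 1 < m) → D.Adj ⟨k+1, h⟩ ⟨k, Nat.lt_of_succ_lt h⟩) :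
    (k : ℕ) → (hk : k < m) → D.Walk ⟨k, hk⟩ ⟨0, hm0⟩
  | 0, _ => SimpleGraph.Walk.nil
  | k+1, hk => SimpleGraph.Walk.cons (hadj k hk) (walkDown hm0 hadj k (Nat.lt_of_succ_lt hk))

lemma walkDown_support_le (hm0 : 0 < m)
    (hadj : ∀ k : ℕ, (h : k + 1 < m) → D.Adj ⟨k+1, h⟩ ⟨k, Nat.lt_of_succ_lt h⟩) :
    ∀ (k : ℕ) (hk : k < m) (x : Fin m), x ∈ (walkDown hm0 hadj k hk).support → (x : ℕ) ≤ k
  | 0, hk, x, hx => by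
    simp [walkDown] at hx; simp [hx]
  | k+1, hk, x, hx => by
    rw [walkDown, SimpleGraph.Walk.support_cons] at hx
    rcases List.mem_cons.1 hx with h | h
    · simp [h]
    · exact (walkDown_support_le hm0 hadj k _ x h).trans (Nat.le_succ k)

lemma walkDown_mem_support (hm0 : 0 < m)
    (hadj : ∀ k : ℕ, (h : k + 1 < m) → D.Adj ⟨k+1, h⟩ ⟨k, Nat.lt_of_succ_lt h⟩) :
    ∀ (k : ℕ) (hk : k < m) (x : Fin m), (x : ℕ) ≤ k → x ∈ (walkDown hm0 hadj k hk).support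
  | 0, hk, x, hx => by
    have : x = ⟨0, hm0⟩ := Fin.ext (by simp only [Fin.val_mk]; omega)
    simp [walkDown, this]
  | k+1, hk, x, hx => by
    rw [walkDown, SimpleGraph.Walk.support_cons]
    rcases Nat.lt_or_ge (x : ℕ) (k+1) with h | h
    · exact List.mem_cons_of_mem _ (walkDown_mem_support hm0 hadj k _ x (by omega))
    · exact List.mem_cons.2 (Or.inl (Fin.ext (by simp only [Fin.val_mk]; omega)))

lemma walkDown_support_nodup (hm0 : 0 < m)
    (hadj : ∀ k : ℕ, (h : k + 1 < m) → D.Adj ⟨k+1, h⟩ ⟨k, Nat.lt_of_succ_lt h⟩) :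
    ∀ (k : ℕ) (hk : k < m), (walkDown hm0 hadj k hk).support.Nodup
  | 0, hk => by simp [walkDown]
  | k+1, hk => by
    rw [walkDown, SimpleGraph.Walk.support_cons]
    refine List.nodup_cons.2 ⟨fun h => ?_, walkDown_support_nodup hm0 hadj k _⟩
    have := walkDown_support_le hm0 hadj k _ _ h
    simp at this

lemma walkDown_edges (hm0 : 0 < m)
    (hadj : ∀ k : ℕ, (h : k + 1 < m) → D.Adj ⟨k+1, h⟩ ⟨k, Nat.lt_of_succ_lt h⟩) :
    ∀ (k : ℕ) (hk : k < m) (e : Sym2 (Fin m)), e ∈ (walkDown hm0 hadj k hk).edges →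
      ∃ (j : ℕ) (hj : j + 1 < m), j + 1 ≤ k ∧
        e = s(⟨j+1, hj⟩, ⟨j, Nat.lt_of_succ_lt hj⟩)
  | 0, hk, e, he => by simp [walkDown] at he
  | k+1, hk, e, he => by
    rw [walkDown, SimpleGraph.Walk.edges_cons] at he
    rcases List.mem_cons.1 he with h | h
    · exact ⟨k, hk, le_refl _, h⟩
    · obtain ⟨j, hj, hjk, hje⟩ := walkDown_edges hm0 hadj k _ e h
      exact ⟨j, hj, hjk.trans (Nat.le_succ k), hje⟩

lemma hamiltonian_of_cycle (hm : 3 ≤ m)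
    (hadj : ∀ k : ℕ, (h : k + 1 < m) → D.Adj ⟨k+1, h⟩ ⟨k, Nat.lt_of_succ_lt h⟩)
    (hwrap : D.Adj ⟨0, by omega⟩ ⟨m-1, by omega⟩) : D.IsHamiltonian := by
  intro _
  have hm0 : 0 < m := by omega
  have hm1 : m - 1 < m := by omega
  set q := walkDown hm0 hadj (m-1) hm1 with hq
  refine ⟨⟨0, hm0⟩, SimpleGraph.Walk.cons hwrap q, ?_⟩
  rw [SimpleGraph.Walk.isHamiltonianCycle_iff_isCycle_and_support_count_tail_eq_one]
  constructor
  · rw [SimpleGraph.Walk.cons_isCycle_iff]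
    refine ⟨SimpleGraph.Walk.IsPath.mk' (walkDown_support_nodup hm0 hadj _ _), fun he => ?_⟩
    obtain ⟨j, hj, hjk, hje⟩ := walkDown_edges hm0 hadj _ _ _ he
    rw [Sym2.eq_iff] at hje
    rcases hje with ⟨h1, h2⟩ | ⟨h1, h2⟩
    · exact absurd (congrArg Fin.val h1) (by simp)
    · have e1 := congrArg Fin.val h1
      have e2 := congrArg Fin.val h2
      simp only [Fin.val_mk] at e1 e2
      omega
  · intro a
    rw [SimpleGraph.Walk.support_cons, List.tail_cons]
    exact List.count_eq_one_of_mem (walkDown_support_nodup hm0 hadj _ _)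
      (walkDown_mem_support hm0 hadj _ _ a (by omega))

end Aux

/-- Any 2-connected subgraph `H` (with at least 3 vertices) of a polygon dissection graph is
outerplanar and has a Hamilton cycle; in particular, `H` is isomorphic to a polygon
dissection graph. -/
theorem subgraph_of_dissection (n : ℕ) (G : SimpleGraph (Fin n)) (hG : IsDissection n G)
    (H : G.Subgraph) [Fintype H.verts]
    (hcard : 3 ≤ Nat.card H.verts) (h2 : H.coe.TwoConnected) :
    H.coe.Outerplanar ∧ H.coe.IsHamiltonian ∧
      ∃ (m : ℕ) (D : SimpleGraph (Fin m)), IsDissection m D ∧ Nonempty (H.coe ≃g D) := by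
  classical
  rw [Nat.card_eq_fintype_card] at hcard
  set m := Fintype.card ↥H.verts with hmdef
  let σ : Fin m ≃o ↥H.verts := Fintype.orderIsoFinOfCardEq ↥H.verts rfl
  let D : SimpleGraph (Fin m) := SimpleGraph.comap (⇑σ) H.coe
  have hDadj : ∀ i j, D.Adj i j ↔ H.coe.Adj (σ i) (σ j) := fun i j => Iff.rfl
  have hGadj : ∀ (x y : ↥H.verts), H.coe.Adj x y → G.Adj x.1 y.1 :=
    fun x y h => H.adj_sub h
  let iso : H.coe ≃g D := ⟨σ.toEquiv.symm, by
    intro a b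
    show H.coe.Adj (σ (σ.symm a)) (σ (σ.symm b)) ↔ H.coe.Adj a b
    simp⟩
  have hcrossD : ∀ a b c d : Fin m, D.Adj a b → D.Adj c d → ¬(a < c ∧ c < b ∧ b < d) := by
    intro a b c d hab hcd ⟨h1, h2, h3⟩
    refine hG.2 (σ a).1 (σ b).1 (σ c).1 (σ d).1 (hGadj _ _ hab) (hGadj _ _ hcd) ⟨?_, ?_, ?_⟩
    · exact_mod_cast σ.lt_iff_lt.2 h1
    · exact_mod_cast σ.lt_iff_lt.2 h2
    · exact_mod_cast σ.lt_iff_lt.2 h3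
  have hconnD : ∀ z : Fin m, (D.induce {z}ᶜ).Connected := by
    intro z
    have hsrc := h2.2 (σ z)
    refine hsrc.map (⟨fun x => ⟨σ.symm x.1, ?_⟩, ?_⟩ :
        (H.coe.induce {σ z}ᶜ) →g (D.induce {z}ᶜ)) ?_
    · intro h
      simp only [Set.mem_singleton_iff] at h
      refine x.2 ?_
      have := congrArg σ h
      rw [OrderIso.apply_symm_apply] at this
      exact this
    · intro a b hab
      show D.Adj (σ.symm a.1) (σ.symm b.1)
      rw [hDadj]
      have hab' : H.coe.Adj a.1 b.1 := hab
      simpa only [OrderIso.apply_symm_apply] using hab'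
    · rintro ⟨j, hj⟩
      refine ⟨⟨σ j, ?_⟩, ?_⟩
      · simp only [Set.mem_compl_iff, Set.mem_singleton_iff] at hj ⊢
        exact fun h => hj (σ.injective h)
      · exact Subtype.ext (σ.symm_apply_apply j)
  have hconsec := consec_adj hcard hcrossD hconnD
  have hwrap := wrap_adj hcard hcrossD hconnD
  have hamD : D.IsHamiltonian := hamiltonian_of_cycle hcard hconsec hwrap
  refine ⟨?_, ?_, m, D, ⟨?_, hcrossD⟩, ⟨iso⟩⟩
  · -- Outerplanar
    refine ⟨m, σ.toEquiv.symm, ?_⟩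
    intro a b c d hab hcd ⟨h1, h2, h3⟩
    have key : ∀ x y : ↥H.verts, σ.toEquiv.symm x < σ.toEquiv.symm y → (x : Fin n) < y := by
      intro x y hxy
      have h' : σ.symm x < σ.symm y := hxy
      have h'' : x < y := σ.symm.lt_iff_lt.1 h'
      exact_mod_cast h''
    exact hG.2 a.1 b.1 c.1 d.1 (hGadj _ _ hab) (hGadj _ _ hcd) ⟨key _ _ h1, key _ _ h2, key _ _ h3⟩
  · -- Hamiltonian
    intro _
    obtain ⟨a, p, hp⟩ := hamD (by simp only [Fintype.card_fin]; omega)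
    exact ⟨iso.symm a, p.map iso.symm.toHom, hp.map (f := iso.symm.toHom) iso.symm.toEquiv.bijective⟩
  · -- the polygon edges of D
    intro idx
    by_cases hlt : (idx : ℕ) + 1 < m
    · have heq : (⟨((idx : ℕ) + 1) % m, Nat.mod_lt _ idx.pos⟩ : Fin m) = ⟨(idx : ℕ) + 1, hlt⟩ :=
        Fin.ext (by simp only [Fin.val_mk]; exact Nat.mod_eq_of_lt hlt)
      rw [heq]
      exact (hconsec idx.1 hlt).symm
    · have hm0 : 0 < m := by omega
      have hm1 : m - 1 < m := by omega
      have hidx : (idx : ℕ) = m - 1 := by have := idx.2; omega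
      have heq : (⟨((idx : ℕ) + 1) % m, Nat.mod_lt _ idx.pos⟩ : Fin m) = ⟨0, hm0⟩ :=
        Fin.ext (by simp only [Fin.val_mk]; rw [hidx, Nat.sub_add_cancel (by omega), Nat.mod_self])
      have heq2 : idx = ⟨m - 1, hm1⟩ := Fin.ext hidx
      rw [heq, heq2]
      exact hwrap.symm
end

section
/- There exist unique formal power series y, y₀, y₃, y₄ over ℚ with constant term 0 satisfying the system: y = y₀ + y₃ + y₄, y₀ = y⁵ + y·y₀ - z·y + z, y₃ = y₀²·(1 + 2y₀), y₄ = (y₀ + y₄)³. The resulting series y has initial coefficients (from z¹) 1, 1, 3, 0, 4, 8, 65, 229, 946. -/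
open PowerSeries

namespace FCFD

noncomputable def G₀ (y y₀ : PowerSeries ℚ) : PowerSeries ℚ := y^5 + y*y₀ - X*y + X
noncomputable def G₃ (y₀ : PowerSeries ℚ) : PowerSeries ℚ := y₀^2*(1+2*y₀)
noncomputable def G₄ (y₀ y₄ : PowerSeries ℚ) : PowerSeries ℚ := (y₀+y₄)^3

lemma xd {f : PowerSeries ℚ} (h : constantCoeff f = 0) : X ∣ f := X_dvd_iff.mpr h

lemma eq_of_forall {f g : PowerSeries ℚ} (h : ∀ n, X^n ∣ f - g) : f = g := by
  rw [← sub_eq_zero]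
  ext n
  have := (X_pow_dvd_iff.mp (h (n+1))) n (Nat.lt_succ_self n)
  simpa using this

lemma L0 {n : ℕ} {y y₀ y' y₀' : PowerSeries ℚ} (hy : X ∣ y) (hy' : X ∣ y') (hy₀' : X ∣ y₀')
    (d1 : X^n ∣ y - y') (d2 : X^n ∣ y₀ - y₀') :
    X^(n+1) ∣ G₀ y y₀ - G₀ y' y₀' := by
  have key : G₀ y y₀ - G₀ y' y₀' =
      (y-y') * (y*(y^3+y^2*y'+y*y'^2+y'^3) + y'*y'^3 + y₀' - X) + (y₀-y₀')*y := by
    unfold G₀; ring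
  rw [key, pow_succ]
  refine dvd_add (mul_dvd_mul d1 ?_) (mul_dvd_mul d2 hy)
  exact dvd_sub (dvd_add (dvd_add (hy.mul_right _) (hy'.mul_right _)) hy₀') dvd_rfl

lemma L3 {n : ℕ} {y₀ y₀' : PowerSeries ℚ} (h : X ∣ y₀) (h' : X ∣ y₀')
    (d : X^n ∣ y₀ - y₀') : X^(n+1) ∣ G₃ y₀ - G₃ y₀' := by
  have key : G₃ y₀ - G₃ y₀' =
      (y₀ - y₀') * (y₀*(1 + 2*y₀ + 2*y₀') + y₀'*(1 + 2*y₀')) := by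
    unfold G₃; ring
  rw [key, pow_succ]
  exact mul_dvd_mul d (dvd_add (h.mul_right _) (h'.mul_right _))

lemma L4 {n : ℕ} {y₀ y₄ y₀' y₄' : PowerSeries ℚ} (h2 : X ∣ y₀) (h4 : X ∣ y₄)
    (h2' : X ∣ y₀') (h4' : X ∣ y₄')
    (d2 : X^n ∣ y₀ - y₀') (d4 : X^n ∣ y₄ - y₄') :
    X^(n+1) ∣ G₄ y₀ y₄ - G₄ y₀' y₄' := by
  have key : G₄ y₀ y₄ - G₄ y₀' y₄' =
      ((y₀ - y₀') + (y₄ - y₄')) *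
        (y₀*((y₀+y₄) + (y₀'+y₄')) + y₄*((y₀+y₄) + (y₀'+y₄'))
          + y₀'*(y₀'+y₄') + y₄'*(y₀'+y₄')) := by
    unfold G₄; ring
  rw [key, pow_succ]
  refine mul_dvd_mul (dvd_add d2 d4) ?_
  exact dvd_add (dvd_add (dvd_add (h2.mul_right _) (h4.mul_right _)) (h2'.mul_right _))
    (h4'.mul_right _)

/-- One contraction step for two (approximate mod `X^K`) solutions. -/
lemma step {K n : ℕ} (hn : n < K) {y y₀ y₃ y₄ y' y₀' y₃' y₄' : PowerSeries ℚ}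
    (cy : X ∣ y) (c2 : X ∣ y₀) (c4 : X ∣ y₄)
    (cy' : X ∣ y') (c2' : X ∣ y₀') (c4' : X ∣ y₄')
    (e1 : y = y₀ + y₃ + y₄) (e1' : y' = y₀' + y₃' + y₄')
    (e2 : X^K ∣ y₀ - G₀ y y₀) (e2' : X^K ∣ y₀' - G₀ y' y₀')
    (e3 : X^K ∣ y₃ - G₃ y₀) (e3' : X^K ∣ y₃' - G₃ y₀')
    (e4 : X^K ∣ y₄ - G₄ y₀ y₄) (e4' : X^K ∣ y₄' - G₄ y₀' y₄')
    (d1 : X^n ∣ y - y') (d2 : X^n ∣ y₀ - y₀') (d3 : X^n ∣ y₃ - y₃')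
    (d4 : X^n ∣ y₄ - y₄') :
    X^(n+1) ∣ y - y' ∧ X^(n+1) ∣ y₀ - y₀' ∧ X^(n+1) ∣ y₃ - y₃' ∧ X^(n+1) ∣ y₄ - y₄' := by
  have hK : (X : PowerSeries ℚ)^(n+1) ∣ X^K := pow_dvd_pow X hn
  have D2 : X^(n+1) ∣ y₀ - y₀' := by
    have h : y₀ - y₀' = ((y₀ - G₀ y y₀) - (y₀' - G₀ y' y₀')) + (G₀ y y₀ - G₀ y' y₀') := by
      ring
    rw [h]
    exact dvd_add (dvd_sub (hK.trans e2) (hK.trans e2')) (L0 cy cy' c2' d1 d2)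
  have D3 : X^(n+1) ∣ y₃ - y₃' := by
    have h : y₃ - y₃' = ((y₃ - G₃ y₀) - (y₃' - G₃ y₀')) + (G₃ y₀ - G₃ y₀') := by ring
    rw [h]
    exact dvd_add (dvd_sub (hK.trans e3) (hK.trans e3')) (L3 c2 c2' d2)
  have D4 : X^(n+1) ∣ y₄ - y₄' := by
    have h : y₄ - y₄' = ((y₄ - G₄ y₀ y₄) - (y₄' - G₄ y₀' y₄')) + (G₄ y₀ y₄ - G₄ y₀' y₄') := by
      ring
    rw [h]
    exact dvd_add (dvd_sub (hK.trans e4) (hK.trans e4')) (L4 c2 c4 c2' c4' d2 d4)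
  have D1 : X^(n+1) ∣ y - y' := by
    have h : y - y' = (y₀ - y₀') + (y₃ - y₃') + (y₄ - y₄') := by rw [e1, e1']; ring
    rw [h]
    exact dvd_add (dvd_add D2 D3) D4
  exact ⟨D1, D2, D3, D4⟩




/-- Any two exact solutions coincide. -/
lemma unique_exact {y y₀ y₃ y₄ y' y₀' y₃' y₄' : PowerSeries ℚ}
    (cy : X ∣ y) (c2 : X ∣ y₀) (c4 : X ∣ y₄)
    (cy' : X ∣ y') (c2' : X ∣ y₀') (c4' : X ∣ y₄')
    (e1 : y = y₀ + y₃ + y₄) (e1' : y' = y₀' + y₃' + y₄')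
    (e2 : y₀ = G₀ y y₀) (e2' : y₀' = G₀ y' y₀')
    (e3 : y₃ = G₃ y₀) (e3' : y₃' = G₃ y₀')
    (e4 : y₄ = G₄ y₀ y₄) (e4' : y₄' = G₄ y₀' y₄') :
    y = y' ∧ y₀ = y₀' ∧ y₃ = y₃' ∧ y₄ = y₄' := by
  have main : ∀ n : ℕ, X^n ∣ y - y' ∧ X^n ∣ y₀ - y₀' ∧ X^n ∣ y₃ - y₃' ∧ X^n ∣ y₄ - y₄' := by
    intro n
    induction n with
    | zero => simp
    | succ n ih =>
      exact step (K := n+1) (Nat.lt_succ_self n) cy c2 c4 cy' c2' c4' e1 e1'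
        (by rw [← e2]; simp) (by rw [← e2']; simp) (by rw [← e3]; simp)
        (by rw [← e3']; simp) (by rw [← e4]; simp) (by rw [← e4']; simp)
        ih.1 ih.2.1 ih.2.2.1 ih.2.2.2
  exact ⟨eq_of_forall fun n => (main n).1, eq_of_forall fun n => (main n).2.1,
    eq_of_forall fun n => (main n).2.2.1, eq_of_forall fun n => (main n).2.2.2⟩

noncomputable def Q1 : PowerSeries ℚ :=
  X + X^2 + 3*X^3 + 4*X^5 + 8*X^6 + 65*X^7 + 229*X^8 + 946*X^9
noncomputable def Q2 : PowerSeries ℚ := X + X^5 + 6*X^6 + 32*X^7 + 111*X^8 + 366*X^9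
noncomputable def Q3 : PowerSeries ℚ := X^2 + 2*X^3 + 2*X^6 + 18*X^7 + 100*X^8 + 414*X^9
noncomputable def Q4 : PowerSeries ℚ := X^3 + 3*X^5 + 15*X^7 + 18*X^8 + 166*X^9

noncomputable def W2 : PowerSeries ℚ := (-1028:PowerSeries ℚ) - 2131*X - 5934*X^2 - 20734*X^3 - 66847*X^4 - 201625*X^5 - 477476*X^6 - 1144610*X^7 - 2538516*X^8 - 6701035*X^9 - 20081645*X^10 - 60718110*X^11 - 145136380*X^12 - 328198980*X^13 - 634320180*X^14 - 1457575594*X^15 - 3567769460*X^16 - 10143127820*X^17 - 25760978280*X^18 - 59766187095*X^19 - 111715646083*X^20 - 207330048765*X^21 - 379573712070*X^22 - 908695651655*X^23 - 2207930420105*X^24 - 5326044845240*X^25 - 10640542050425*X^26 - 18218357056480*X^27 - 24940155812450*X^28 - 40439916039465*X^29 - 76951375934709*X^30 - 187326862355490*X^31 - 391535352448680*X^32 - 704244803276960*X^33 - 917001470879120*X^34 - 757627416114976*X^35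
noncomputable def W3 : PowerSeries ℚ := (-1399:PowerSeries ℚ) - 2214*X - 172*X^2 - 1206*X^3 - 6724*X^4 - 30026*X^5 - 104757*X^6 - 296130*X^7 - 624870*X^8 - 826980*X^9 - 129816*X^10 - 614806*X^11 - 2456316*X^12 - 8343144*X^13 - 23158062*X^14 - 52776468*X^15 - 89214696*X^16 - 98055792*X^17
noncomputable def W4 : PowerSeries ℚ := (-423:PowerSeries ℚ) - 1938*X - 936*X^2 - 4617*X^3 - 5319*X^4 - 26935*X^5 - 60606*X^6 - 226674*X^7 - 480474*X^8 - 1124715*X^9 - 687582*X^10 - 2028407*X^11 - 3701637*X^12 - 11738841*X^13 - 26594217*X^14 - 66465420*X^15 - 109530288*X^16 - 150568768*X^17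

set_option maxHeartbeats 1000000 in
lemma QE2 : Q2 - G₀ Q1 Q2 = X^10 * W2 := by unfold G₀ Q1 Q2 W2; ring
set_option maxHeartbeats 1000000 in
lemma QE3 : Q3 - G₃ Q2 = X^10 * W3 := by unfold G₃ Q2 Q3 W3; ring
set_option maxHeartbeats 1000000 in
lemma QE4 : Q4 - G₄ Q2 Q4 = X^10 * W4 := by unfold G₄ Q2 Q4 W4; ring
lemma QE1 : Q1 = Q2 + Q3 + Q4 := by unfold Q1 Q2 Q3 Q4; ring

lemma cQ1 : X ∣ Q1 := xd (by simp [Q1])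
lemma cQ2 : X ∣ Q2 := xd (by simp [Q2])
lemma cQ4 : X ∣ Q4 := xd (by simp [Q4])

/-- Any exact solution agrees with `Q1` below degree `10`. -/
lemma approx {y y₀ y₃ y₄ : PowerSeries ℚ}
    (cy : X ∣ y) (c2 : X ∣ y₀) (c4 : X ∣ y₄)
    (e1 : y = y₀ + y₃ + y₄) (e2 : y₀ = G₀ y y₀) (e3 : y₃ = G₃ y₀) (e4 : y₄ = G₄ y₀ y₄) :
    X^10 ∣ y - Q1 := by
  have main : ∀ n : ℕ, n ≤ 10 →
      X^n ∣ y - Q1 ∧ X^n ∣ y₀ - Q2 ∧ X^n ∣ y₃ - Q3 ∧ X^n ∣ y₄ - Q4 := by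
    intro n
    induction n with
    | zero => intro _; simp
    | succ n ih =>
      intro hn
      have hn' : n ≤ 10 := Nat.le_of_succ_le hn
      obtain ⟨d1, d2, d3, d4⟩ := ih hn'
      exact step (K := 10) hn cy c2 c4 cQ1 cQ2 cQ4 e1 QE1
        (by rw [← e2]; simp) ⟨W2, QE2⟩ (by rw [← e3]; simp) ⟨W3, QE3⟩
        (by rw [← e4]; simp) ⟨W4, QE4⟩ d1 d2 d3 d4
  exact (main 10 le_rfl).1

lemma hnum (n : ℕ) [n.AtLeastTwo] :
    ((OfNat.ofNat n : PowerSeries ℚ)) = C (OfNat.ofNat n) := (map_ofNat _ _).symm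

lemma coeffs_of_exact {y y₀ y₃ y₄ : PowerSeries ℚ}
    (cy : X ∣ y) (c2 : X ∣ y₀) (c4 : X ∣ y₄)
    (e1 : y = y₀ + y₃ + y₄) (e2 : y₀ = G₀ y y₀) (e3 : y₃ = G₃ y₀) (e4 : y₄ = G₄ y₀ y₄) :
    PowerSeries.coeff 1 y = 1 ∧ PowerSeries.coeff 2 y = 1 ∧
    PowerSeries.coeff 3 y = 3 ∧ PowerSeries.coeff 4 y = 0 ∧
    PowerSeries.coeff 5 y = 4 ∧ PowerSeries.coeff 6 y = 8 ∧
    PowerSeries.coeff 7 y = 65 ∧ PowerSeries.coeff 8 y = 229 ∧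
    PowerSeries.coeff 9 y = 946 := by
  have h := approx cy c2 c4 e1 e2 e3 e4
  have hc : ∀ k < 10, coeff k y = coeff k Q1 := by
    intro k hk
    have := (X_pow_dvd_iff.mp h) k hk
    rw [map_sub, sub_eq_zero] at this
    exact this
  refine ⟨?_, ?_, ?_, ?_, ?_, ?_, ?_, ?_, ?_⟩ <;>
    · rw [hc _ (by norm_num)]
      simp [Q1, hnum, coeff_C_mul, coeff_X_pow, coeff_X]


section Existence

abbrev Quad := PowerSeries ℚ × PowerSeries ℚ × PowerSeries ℚ × PowerSeries ℚ

noncomputable def Fm (p : Quad) : Quad :=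
  (p.2.1 + p.2.2.1 + p.2.2.2, G₀ p.1 p.2.1, G₃ p.2.1, G₄ p.2.1 p.2.2.2)

noncomputable def A : ℕ → Quad
  | 0 => (0, 0, 0, 0)
  | n+1 => Fm (A n)

lemma A_succ (n : ℕ) : A (n+1) = Fm (A n) := rfl

def Cz (p : Quad) : Prop :=
  constantCoeff p.1 = 0 ∧ constantCoeff p.2.1 = 0 ∧
  constantCoeff p.2.2.1 = 0 ∧ constantCoeff p.2.2.2 = 0

def D (n : ℕ) (p q : Quad) : Prop :=
  X^n ∣ p.1 - q.1 ∧ X^n ∣ p.2.1 - q.2.1 ∧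
  X^n ∣ p.2.2.1 - q.2.2.1 ∧ X^n ∣ p.2.2.2 - q.2.2.2

lemma Cz_Fm {p : Quad} (h : Cz p) : Cz (Fm p) := by
  obtain ⟨h1, h2, h3, h4⟩ := h
  refine ⟨?_, ?_, ?_, ?_⟩ <;>
    simp [Fm, G₀, G₃, G₄, h1, h2, h3, h4]

lemma Cz_A : ∀ n, Cz (A n)
  | 0 => by refine ⟨?_, ?_, ?_, ?_⟩ <;> simp [A]
  | n+1 => by rw [A_succ]; exact Cz_Fm (Cz_A n)

lemma Drefl (n : ℕ) (p : Quad) : D n p p := by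
  refine ⟨?_, ?_, ?_, ?_⟩ <;> simp

lemma Dsymm {n : ℕ} {p q : Quad} (h : D n p q) : D n q p := by
  obtain ⟨h1, h2, h3, h4⟩ := h
  refine ⟨?_, ?_, ?_, ?_⟩
  · rw [show q.1 - p.1 = -(p.1 - q.1) by ring]; exact h1.neg_right
  · rw [show q.2.1 - p.2.1 = -(p.2.1 - q.2.1) by ring]; exact h2.neg_right
  · rw [show q.2.2.1 - p.2.2.1 = -(p.2.2.1 - q.2.2.1) by ring]; exact h3.neg_right
  · rw [show q.2.2.2 - p.2.2.2 = -(p.2.2.2 - q.2.2.2) by ring]; exact h4.neg_right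

lemma Dtrans {n : ℕ} {p q r : Quad} (h : D n p q) (h' : D n q r) : D n p r := by
  obtain ⟨h1, h2, h3, h4⟩ := h
  obtain ⟨g1, g2, g3, g4⟩ := h'
  refine ⟨?_, ?_, ?_, ?_⟩
  · have e : p.1 - r.1 = (p.1 - q.1) + (q.1 - r.1) := by ring
    rw [e]; exact dvd_add h1 g1
  · have e : p.2.1 - r.2.1 = (p.2.1 - q.2.1) + (q.2.1 - r.2.1) := by ring
    rw [e]; exact dvd_add h2 g2
  · have e : p.2.2.1 - r.2.2.1 = (p.2.2.1 - q.2.2.1) + (q.2.2.1 - r.2.2.1) := by ring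
    rw [e]; exact dvd_add h3 g3
  · have e : p.2.2.2 - r.2.2.2 = (p.2.2.2 - q.2.2.2) + (q.2.2.2 - r.2.2.2) := by ring
    rw [e]; exact dvd_add h4 g4

lemma Dweak {n : ℕ} {p q : Quad} (h : D (n+1) p q) : D n p q := by
  obtain ⟨h1, h2, h3, h4⟩ := h
  exact ⟨(pow_dvd_pow X n.le_succ).trans h1, (pow_dvd_pow X n.le_succ).trans h2,
    (pow_dvd_pow X n.le_succ).trans h3, (pow_dvd_pow X n.le_succ).trans h4⟩

lemma contr {n : ℕ} {p q : Quad} (hp : Cz p) (hq : Cz q) (d : D n p q) :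
    X^n ∣ (Fm p).1 - (Fm q).1 ∧ X^(n+1) ∣ (Fm p).2.1 - (Fm q).2.1 ∧
    X^(n+1) ∣ (Fm p).2.2.1 - (Fm q).2.2.1 ∧ X^(n+1) ∣ (Fm p).2.2.2 - (Fm q).2.2.2 := by
  obtain ⟨d1, d2, d3, d4⟩ := d
  refine ⟨?_, L0 (xd hp.1) (xd hq.1) (xd hq.2.1) d1 d2, L3 (xd hp.2.1) (xd hq.2.1) d2,
    L4 (xd hp.2.1) (xd hp.2.2.2) (xd hq.2.1) (xd hq.2.2.2) d2 d4⟩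
  show X^n ∣ (p.2.1 + p.2.2.1 + p.2.2.2) - (q.2.1 + q.2.2.1 + q.2.2.2)
  have e : (p.2.1 + p.2.2.1 + p.2.2.2) - (q.2.1 + q.2.2.1 + q.2.2.2)
      = (p.2.1 - q.2.1) + (p.2.2.1 - q.2.2.1) + (p.2.2.2 - q.2.2.2) := by ring
  rw [e]; exact dvd_add (dvd_add d2 d3) d4

lemma contr1 {n : ℕ} {p q : Quad} (hp : Cz p) (hq : Cz q) (d : D n p q) :
    D n (Fm p) (Fm q) := by
  obtain ⟨h1, h2, h3, h4⟩ := contr hp hq d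
  exact ⟨h1, (pow_dvd_pow X n.le_succ).trans h2, (pow_dvd_pow X n.le_succ).trans h3,
    (pow_dvd_pow X n.le_succ).trans h4⟩

lemma contr2 {n : ℕ} {p q : Quad} (hp : Cz p) (hq : Cz q) (d : D n p q) :
    D (n+1) (Fm (Fm p)) (Fm (Fm q)) := by
  have h := contr hp hq d
  have hD : D n (Fm p) (Fm q) := contr1 hp hq d
  have h2 := contr (Cz_Fm hp) (Cz_Fm hq) hD
  refine ⟨?_, h2.2.1, h2.2.2.1, h2.2.2.2⟩
  show X^(n+1) ∣ ((Fm p).2.1 + (Fm p).2.2.1 + (Fm p).2.2.2)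
      - ((Fm q).2.1 + (Fm q).2.2.1 + (Fm q).2.2.2)
  have e : ((Fm p).2.1 + (Fm p).2.2.1 + (Fm p).2.2.2)
      - ((Fm q).2.1 + (Fm q).2.2.1 + (Fm q).2.2.2)
      = ((Fm p).2.1 - (Fm q).2.1) + ((Fm p).2.2.1 - (Fm q).2.2.1)
        + ((Fm p).2.2.2 - (Fm q).2.2.2) := by ring
  rw [e]; exact dvd_add (dvd_add h.2.1 h.2.2.1) h.2.2.2

lemma Dbase : ∀ n, D n (A (2*n)) (A (2*n+1)) := by
  intro n
  induction n with
  | zero => refine ⟨?_, ?_, ?_, ?_⟩ <;> simp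
  | succ n ih =>
      have h := contr2 (Cz_A (2*n)) (Cz_A (2*n+1)) ih
      have e1 : 2*(n+1) = (2*n+1)+1 := by ring
      rw [e1]
      simp only [A_succ] at h ⊢
      exact h

lemma Dstep_ge {n : ℕ} : ∀ m, 2*n ≤ m → D n (A m) (A (m+1)) := by
  intro m hm
  induction m, hm using Nat.le_induction with
  | base => exact Dbase n
  | succ m hm ih =>
      rw [A_succ (m+1), A_succ m]
      exact contr1 (Cz_A m) (Cz_A (m+1)) ih

lemma Dfar {n : ℕ} : ∀ m, 2*n ≤ m → D n (A (2*n)) (A m) := by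
  intro m hm
  induction m, hm using Nat.le_induction with
  | base => exact Drefl n _
  | succ m hm ih => exact Dtrans ih (Dstep_ge m hm)

noncomputable def s : Quad :=
  (PowerSeries.mk fun k => coeff k (A (2*k+2)).1,
   PowerSeries.mk fun k => coeff k (A (2*k+2)).2.1,
   PowerSeries.mk fun k => coeff k (A (2*k+2)).2.2.1,
   PowerSeries.mk fun k => coeff k (A (2*k+2)).2.2.2)

lemma stab (k m : ℕ) (h : 2*k+2 ≤ m) :
    coeff k (A (2*k+2)).1 = coeff k (A m).1 ∧
    coeff k (A (2*k+2)).2.1 = coeff k (A m).2.1 ∧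
    coeff k (A (2*k+2)).2.2.1 = coeff k (A m).2.2.1 ∧
    coeff k (A (2*k+2)).2.2.2 = coeff k (A m).2.2.2 := by
  have e : 2*(k+1) = 2*k+2 := by ring
  have hD : D (k+1) (A (2*k+2)) (A m) := e ▸ Dfar m (e ▸ h)
  have hk : k < k+1 := Nat.lt_succ_self k
  obtain ⟨h1, h2, h3, h4⟩ := hD
  refine ⟨?_, ?_, ?_, ?_⟩
  · have := X_pow_dvd_iff.mp h1 k hk; rwa [map_sub, sub_eq_zero] at this
  · have := X_pow_dvd_iff.mp h2 k hk; rwa [map_sub, sub_eq_zero] at this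
  · have := X_pow_dvd_iff.mp h3 k hk; rwa [map_sub, sub_eq_zero] at this
  · have := X_pow_dvd_iff.mp h4 k hk; rwa [map_sub, sub_eq_zero] at this

lemma Ds (n : ℕ) : D n s (A (2*n)) := by
  refine ⟨?_, ?_, ?_, ?_⟩ <;>
  · rw [X_pow_dvd_iff]
    intro m hm
    have hle : 2*m+2 ≤ 2*n := by omega
    rw [map_sub, sub_eq_zero]
    simp only [s, coeff_mk]
    first
    | exact (stab m (2*n) hle).1
    | exact (stab m (2*n) hle).2.1
    | exact (stab m (2*n) hle).2.2.1
    | exact (stab m (2*n) hle).2.2.2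

lemma Cz_s : Cz s := by
  have h := Cz_A 2
  refine ⟨?_, ?_, ?_, ?_⟩
  · show constantCoeff (PowerSeries.mk fun k => coeff k (A (2*k+2)).1) = 0
    rw [constantCoeff_mk]
    exact (coeff_zero_eq_constantCoeff_apply _).trans h.1
  · show constantCoeff (PowerSeries.mk fun k => coeff k (A (2*k+2)).2.1) = 0
    rw [constantCoeff_mk]
    exact (coeff_zero_eq_constantCoeff_apply _).trans h.2.1
  · show constantCoeff (PowerSeries.mk fun k => coeff k (A (2*k+2)).2.2.1) = 0
    rw [constantCoeff_mk]
    exact (coeff_zero_eq_constantCoeff_apply _).trans h.2.2.1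
  · show constantCoeff (PowerSeries.mk fun k => coeff k (A (2*k+2)).2.2.2) = 0
    rw [constantCoeff_mk]
    exact (coeff_zero_eq_constantCoeff_apply _).trans h.2.2.2

lemma Dsfix (n : ℕ) : D n s (Fm s) := by
  have h1 : D n s (A (2*n+1)) := Dtrans (Ds n) (Dstep_ge (2*n) le_rfl)
  have h2 : D n (A (2*n+1)) (Fm s) := by
    rw [A_succ]
    exact contr1 (Cz_A (2*n)) Cz_s (Dsymm (Ds n))
  exact Dtrans h1 h2

lemma sfix : s = Fm s := by
  have e1 : s.1 = (Fm s).1 := eq_of_forall fun n => (Dsfix n).1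
  have e2 : s.2.1 = (Fm s).2.1 := eq_of_forall fun n => (Dsfix n).2.1
  have e3 : s.2.2.1 = (Fm s).2.2.1 := eq_of_forall fun n => (Dsfix n).2.2.1
  have e4 : s.2.2.2 = (Fm s).2.2.2 := eq_of_forall fun n => (Dsfix n).2.2.2
  exact Prod.ext e1 (Prod.ext e2 (Prod.ext e3 e4))

end Existence


lemma sE1 : s.1 = s.2.1 + s.2.2.1 + s.2.2.2 := congrArg Prod.fst sfix

lemma sE2 : s.2.1 = s.1 ^ 5 + s.1 * s.2.1 - X * s.1 + X := congrArg (fun p => p.2.1) sfix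

lemma sE3 : s.2.2.1 = s.2.1 ^ 2 * (1 + 2 * s.2.1) := congrArg (fun p => p.2.2.1) sfix

lemma sE4 : s.2.2.2 = (s.2.1 + s.2.2.2) ^ 3 := congrArg (fun p => p.2.2.2) sfix

end FCFD

/-- There exist unique formal power series `y, y₀, y₃, y₄` over `ℚ`, all with constant term
`0`, satisfying the system `y = y₀ + y₃ + y₄`, `y₀ = y⁵ + y·y₀ - z·y + z`,
`y₃ = y₀²·(1 + 2y₀)`, `y₄ = (y₀ + y₄)³`, and the resulting `y` has initial coefficients
`1, 1, 3, 0, 4, 8, 65, 229, 946` (for `z¹` through `z⁹`).  This is the generating function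
of polygon dissections avoiding 5-cycles as subgraphs. -/
theorem five_cycle_free_dissections :
    (∃! p : PowerSeries ℚ × PowerSeries ℚ × PowerSeries ℚ × PowerSeries ℚ,
        PowerSeries.constantCoeff p.1 = 0 ∧
        PowerSeries.constantCoeff p.2.1 = 0 ∧
        PowerSeries.constantCoeff p.2.2.1 = 0 ∧
        PowerSeries.constantCoeff p.2.2.2 = 0 ∧
        p.1 = p.2.1 + p.2.2.1 + p.2.2.2 ∧
        p.2.1 = p.1 ^ 5 + p.1 * p.2.1 - X * p.1 + X ∧
        p.2.2.1 = p.2.1 ^ 2 * (1 + 2 * p.2.1) ∧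
        p.2.2.2 = (p.2.1 + p.2.2.2) ^ 3) ∧
    (∀ y y₀ y₃ y₄ : PowerSeries ℚ,
        PowerSeries.constantCoeff y = 0 →
        PowerSeries.constantCoeff y₀ = 0 →
        PowerSeries.constantCoeff y₃ = 0 →
        PowerSeries.constantCoeff y₄ = 0 →
        y = y₀ + y₃ + y₄ →
        y₀ = y ^ 5 + y * y₀ - X * y + X →
        y₃ = y₀ ^ 2 * (1 + 2 * y₀) →
        y₄ = (y₀ + y₄) ^ 3 →
        PowerSeries.coeff 1 y = 1 ∧
        PowerSeries.coeff 2 y = 1 ∧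
        PowerSeries.coeff 3 y = 3 ∧
        PowerSeries.coeff 4 y = 0 ∧
        PowerSeries.coeff 5 y = 4 ∧
        PowerSeries.coeff 6 y = 8 ∧
        PowerSeries.coeff 7 y = 65 ∧
        PowerSeries.coeff 8 y = 229 ∧
        PowerSeries.coeff 9 y = 946) := by
  constructor
  · refine ⟨FCFD.s, ⟨FCFD.Cz_s.1, FCFD.Cz_s.2.1, FCFD.Cz_s.2.2.1, FCFD.Cz_s.2.2.2,
      FCFD.sE1, FCFD.sE2, FCFD.sE3, FCFD.sE4⟩, ?_⟩
    rintro ⟨y, y₀, y₃, y₄⟩ ⟨c1, c2, c3, c4, e1, e2, e3, e4⟩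
    obtain ⟨h1, h2, h3, h4⟩ := FCFD.unique_exact (FCFD.xd c1) (FCFD.xd c2) (FCFD.xd c4)
      (FCFD.xd FCFD.Cz_s.1) (FCFD.xd FCFD.Cz_s.2.1) (FCFD.xd FCFD.Cz_s.2.2.2)
      e1 FCFD.sE1 e2 FCFD.sE2 e3 FCFD.sE3 e4 FCFD.sE4
    exact Prod.ext h1 (Prod.ext h2 (Prod.ext h3 h4))
  · intro y y₀ y₃ y₄ c1 c2 c3 c4 e1 e2 e3 e4
    exact FCFD.coeffs_of_exact (FCFD.xd c1) (FCFD.xd c2) (FCFD.xd c4) e1 e2 e3 e4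
end
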